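/- Let a and b be (possibly unbounded) operators on a Hilbert space H with vectors Φ_0, η_0 satisfying aΦ_0 = 0, b†η_0 = 0, Φ_0 ∈ D^∞(b), η_0 ∈ D^∞(a†). Define Φ_n = (ε_n!)^{-1/2} b^n Φ_0 and η_n = (ε_n!)^{-1/2} (a†)^n η_0 where 0 = ε_0 < ε_1 < ε_2 < ⋯ and ε_n! = ε_1⋯ε_n. If a Φ_n = √ε_n Φ_{n-1} and b† η_n = √ε_n η_{n-1} for all n ≥ 1, and ⟨Φ_0, η_0⟩ = 1, then ⟨Φ_n, η_m⟩ = δ_{nm} for all n, m ≥ 0. -/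

import Mathlib

local notation "⟪" x ", " y "⟫" => @inner ℂ _ _ x y

/-- NLPB biorthogonality: with `Φ n = (ε_n!)^{-1/2} b^n Φ₀`,
`η n = (ε_n!)^{-1/2} (a†)^n η₀`, the ladder relations and `⟨Φ₀, η₀⟩ = 1`,
one has `⟨Φ n, η m⟩ = δ_{nm}`. -/
theorem stmt1 {H : Type*} [NormedAddCommGroup H] [InnerProductSpace ℂ H]
    [CompleteSpace H] (a b ad bd : H →ₗ[ℂ] H)
    (hadja : ∀ x y : H, ⟪a x, y⟫ = ⟪x, ad y⟫)
    (hadjb : ∀ x y : H, ⟪b x, y⟫ = ⟪x, bd y⟫)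
    (ε : ℕ → ℝ) (hε0 : ε 0 = 0) (hmono : StrictMono ε)
    (Φ0 η0 : H) (haΦ0 : a Φ0 = 0) (hbdη0 : bd η0 = 0)
    (Φ η : ℕ → H)
    (hΦ : ∀ n : ℕ, Φ n =
      ((Real.sqrt (∏ k ∈ Finset.range n, ε (k + 1)) : ℂ))⁻¹ • (b ^ n) Φ0)
    (hη : ∀ n : ℕ, η n =
      ((Real.sqrt (∏ k ∈ Finset.range n, ε (k + 1)) : ℂ))⁻¹ • (ad ^ n) η0)
    (hlow : ∀ n : ℕ, 1 ≤ n → a (Φ n) = (Real.sqrt (ε n) : ℂ) • Φ (n - 1))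
    (hlow' : ∀ n : ℕ, 1 ≤ n → bd (η n) = (Real.sqrt (ε n) : ℂ) • η (n - 1))
    (hnorm : ⟪Φ0, η0⟫ = 1) :
    ∀ n m : ℕ, ⟪Φ n, η m⟫ = if n = m then (1 : ℂ) else 0 := by
  have hεpos : ∀ n : ℕ, 0 < ε (n + 1) := fun n => hε0 ▸ hmono (Nat.succ_pos n)
  have hprod : ∀ n : ℕ, 0 < ∏ k ∈ Finset.range n, ε (k + 1) :=
    fun n => Finset.prod_pos (fun k _ => hεpos k)
  have hΦz : Φ 0 = Φ0 := by simp [hΦ]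
  have hηz : η 0 = η0 := by simp [hη]
  have hcoef : ∀ n : ℕ,
      ((Real.sqrt (∏ k ∈ Finset.range (n + 1), ε (k + 1)) : ℂ))⁻¹
        = ((Real.sqrt (ε (n + 1)) : ℂ))⁻¹
          * ((Real.sqrt (∏ k ∈ Finset.range n, ε (k + 1)) : ℂ))⁻¹ := by
    intro n
    rw [Finset.prod_range_succ, Real.sqrt_mul (le_of_lt (hprod n))]
    push_cast
    rw [mul_inv, mul_comm]
  have hηrec : ∀ m : ℕ, η (m + 1) = ((Real.sqrt (ε (m + 1)) : ℂ))⁻¹ • ad (η m) := by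
    intro m
    rw [hη (m + 1), hη m, pow_succ', Module.End.mul_apply, map_smul, smul_smul, hcoef]
  have hΦrec : ∀ n : ℕ, Φ (n + 1) = ((Real.sqrt (ε (n + 1)) : ℂ))⁻¹ • b (Φ n) := by
    intro n
    rw [hΦ (n + 1), hΦ n, pow_succ', Module.End.mul_apply, map_smul, smul_smul, hcoef]
  have hsne : ∀ n : ℕ, (Real.sqrt (ε (n + 1)) : ℂ) ≠ 0 := by
    intro n
    exact_mod_cast (Real.sqrt_pos.mpr (hεpos n)).ne'
  intro n
  induction n with
  | zero =>
    intro m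
    cases m with
    | zero => simpa [hΦz, hηz] using hnorm
    | succ m =>
      rw [hηrec m, inner_smul_right, ← hadja, hΦz, haΦ0]
      simp
  | succ n ih =>
    intro m
    cases m with
    | zero =>
      rw [hΦrec n, inner_smul_left, hadjb, hηz, hbdη0]
      simp
    | succ m =>
      rw [hηrec m, inner_smul_right, ← hadja, hlow (n + 1) (Nat.le_add_left 1 n)]
      simp only [Nat.add_sub_cancel]
      rw [inner_smul_left, ih m, Complex.conj_ofReal]
      by_cases h : n = m
      · subst h
        simp [inv_mul_cancel₀ (hsne n)]
      · simp [h]
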